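/- If φ ∈ L^∞(𝕋) and T^α_φ is left invertible for every α ∈ 𝔹², then there exists ε ∈ (0,1] such that ‖T^α_φ f‖ ≥ ε‖f‖ for every α ∈ 𝔹² and every f ∈ H²_α (i.e. the lower bounds can be chosen uniformly in α). -/

import Mathlib

open MeasureTheory Complex AddCircle
open scoped ENNReal

noncomputable section

instance fact_two_pi_pos : Fact (0 < 2 * Real.pi) := ⟨by positivity⟩

/-- The unit circle `𝕋`, realized as `ℝ / 2πℤ`. -/
abbrev CircleT : Type := AddCircle (2 * Real.pi)

/-- Normalized arc-length measure `dt/2π` on the circle. -/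
abbrev hm : Measure CircleT := haarAddCircle

/-- The `n`-th Fourier coefficient of an `L²` function on the circle. -/
def hat2 (f : Lp ℂ 2 hm) (n : ℤ) : ℂ := fourierBasis.repr f n

lemma hat2_eq_inner (f : Lp ℂ 2 hm) (n : ℤ) :
    hat2 f n = @inner ℂ _ _ ((fourierBasis (T := 2 * Real.pi)) n) f :=
  fourierBasis.repr_apply_apply f n

lemma continuous_hat2 (n : ℤ) : Continuous fun f : Lp ℂ 2 hm => hat2 f n := by
  simp only [hat2_eq_inner]
  exact continuous_const.inner continuous_id

@[simp] lemma hat2_add (f g : Lp ℂ 2 hm) (n : ℤ) :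
    hat2 (f + g) n = hat2 f n + hat2 g n := by
  simp [hat2, map_add]

@[simp] lemma hat2_smul (c : ℂ) (f : Lp ℂ 2 hm) (n : ℤ) :
    hat2 (c • f) n = c * hat2 f n := by
  simp [hat2, _root_.map_smul]

@[simp] lemma hat2_zero (n : ℤ) : hat2 0 n = 0 := by simp [hat2]

/-- The Hardy space `H² ⊂ L²`: vanishing negative Fourier coefficients. -/
def Hardy2 : Submodule ℂ (Lp ℂ 2 hm) where
  carrier := {f | ∀ n : ℤ, n < 0 → hat2 f n = 0}
  add_mem' := fun hf hg n hn => by simp [hf n hn, hg n hn]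
  zero_mem' := fun n _ => hat2_zero n
  smul_mem' := fun c f hf n hn => by simp [hf n hn]

/-- The subspace `z²H² ⊂ H²`: Fourier coefficients vanish below index 2. -/
def Hardy20 : Submodule ℂ (Lp ℂ 2 hm) where
  carrier := {f | ∀ n : ℤ, n < 2 → hat2 f n = 0}
  add_mem' := fun hf hg n hn => by simp [hf n hn, hg n hn]
  zero_mem' := fun n _ => hat2_zero n
  smul_mem' := fun c f hf n hn => by simp [hf n hn]

/-- The unit sphere `𝔹² = {(a,b) ∈ ℂ² : |a|² + |b|² = 1}`. -/
def B2 : Set (ℂ × ℂ) := {α | ‖α.1‖ ^ 2 + ‖α.2‖ ^ 2 = 1}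

/-- The space `H²_α = {f ∈ H² : b·f(0) = a·f'(0)}` for `α = (a,b)`; here `f(0) = f̂(0)` and
`f'(0) = f̂(1)`. -/
def HardyA (α : ℂ × ℂ) : Submodule ℂ (Lp ℂ 2 hm) where
  carrier := {f | (∀ n : ℤ, n < 0 → hat2 f n = 0) ∧ α.2 * hat2 f 0 = α.1 * hat2 f 1}
  add_mem' := fun hf hg =>
    ⟨fun n hn => by simp [hf.1 n hn, hg.1 n hn],
     by simp only [hat2_add, mul_add, hf.2, hg.2]⟩
  zero_mem' := ⟨fun n _ => hat2_zero n, by simp⟩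
  smul_mem' := fun c f hf =>
    ⟨fun n hn => by simp [hf.1 n hn],
     by simp only [hat2_smul, mul_left_comm, hf.2]⟩

lemma isClosed_vanishing (s : Set ℤ) :
    IsClosed {f : Lp ℂ 2 hm | ∀ n ∈ s, hat2 f n = 0} := by
  have : {f : Lp ℂ 2 hm | ∀ n ∈ s, hat2 f n = 0}
      = ⋂ (n : ℤ) (_ : n ∈ s), {f | hat2 f n = 0} := by
    ext f; simp
  rw [this]
  exact isClosed_iInter fun n => isClosed_iInter fun _ =>
    isClosed_eq (continuous_hat2 n) continuous_const

lemma isClosed_Hardy2 : IsClosed (Hardy2 : Set (Lp ℂ 2 hm)) := by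
  have := isClosed_vanishing {n : ℤ | n < 0}
  simpa [Hardy2] using this

lemma isClosed_Hardy20 : IsClosed (Hardy20 : Set (Lp ℂ 2 hm)) := by
  have := isClosed_vanishing {n : ℤ | n < 2}
  simpa [Hardy20] using this

lemma isClosed_HardyA (α : ℂ × ℂ) : IsClosed (HardyA α : Set (Lp ℂ 2 hm)) := by
  have h1 := isClosed_vanishing {n : ℤ | n < 0}
  have h2 : IsClosed {f : Lp ℂ 2 hm | α.2 * hat2 f 0 = α.1 * hat2 f 1} :=
    isClosed_eq (continuous_const.mul (continuous_hat2 0))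
      (continuous_const.mul (continuous_hat2 1))
  have : (HardyA α : Set (Lp ℂ 2 hm))
      = {f : Lp ℂ 2 hm | ∀ n ∈ {n : ℤ | n < 0}, hat2 f n = 0}
        ∩ {f : Lp ℂ 2 hm | α.2 * hat2 f 0 = α.1 * hat2 f 1} := by
    ext f; simp [HardyA, Set.mem_setOf_eq]
  rw [this]
  exact h1.inter h2

instance : CompleteSpace Hardy2 := isClosed_Hardy2.completeSpace_coe
instance : CompleteSpace Hardy20 := isClosed_Hardy20.completeSpace_coe
instance (α : ℂ × ℂ) : CompleteSpace (HardyA α) := (isClosed_HardyA α).completeSpace_coe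

/-- Multiplication of an `L²` function by an `L^∞` function, as an element of `L²`. -/
def mulFun (φ : Lp ℂ ∞ hm) (f : Lp ℂ 2 hm) : Lp ℂ 2 hm :=
  ((Lp.memLp f).smul (r := 2) (Lp.memLp φ)).toLp (⇑φ • ⇑f)

lemma coeFn_mulFun (φ : Lp ℂ ∞ hm) (f : Lp ℂ 2 hm) :
    mulFun φ f =ᵐ[hm] fun t => φ t * f t := by
  filter_upwards [MemLp.coeFn_toLp ((Lp.memLp f).smul (r := 2) (Lp.memLp φ))] with t ht
  simpa [mulFun, Pi.smul_apply', smul_eq_mul] using ht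
lemma mulFun_add' (φ : Lp ℂ ∞ hm) (f g : Lp ℂ 2 hm) :
    mulFun φ (f + g) = mulFun φ f + mulFun φ g := by
  apply Lp.ext
  filter_upwards [coeFn_mulFun φ (f + g), coeFn_mulFun φ f, coeFn_mulFun φ g,
    Lp.coeFn_add f g, Lp.coeFn_add (mulFun φ f) (mulFun φ g)] with t h1 h2 h3 h4 h5
  simp only [h5, Pi.add_apply, h1, h2, h3, h4]
  ring

lemma mulFun_smul' (φ : Lp ℂ ∞ hm) (c : ℂ) (f : Lp ℂ 2 hm) :
    mulFun φ (c • f) = c • mulFun φ f := by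
  apply Lp.ext
  filter_upwards [coeFn_mulFun φ (c • f), coeFn_mulFun φ f,
    Lp.coeFn_smul c f, Lp.coeFn_smul c (mulFun φ f)] with t h1 h2 h3 h4
  simp only [h4, Pi.smul_apply, h1, h2, h3, smul_eq_mul]
  ring

lemma norm_mulFun_le (φ : Lp ℂ ∞ hm) (f : Lp ℂ 2 hm) : ‖mulFun φ f‖ ≤ ‖φ‖ * ‖f‖ := by
  rw [mulFun, Lp.norm_toLp]
  have h := eLpNorm_smul_le_eLpNorm_top_mul_eLpNorm (μ := hm) 2 (Lp.aestronglyMeasurable f) ⇑φ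
  calc (eLpNorm (⇑φ • ⇑f) 2 hm).toReal
      ≤ ((eLpNorm (⇑φ) ∞ hm) * eLpNorm (⇑f) 2 hm).toReal := by
        apply ENNReal.toReal_mono _ h
        exact ENNReal.mul_ne_top (Lp.eLpNorm_ne_top φ) (Lp.eLpNorm_ne_top f)
    _ = ‖φ‖ * ‖f‖ := by rw [ENNReal.toReal_mul, Lp.norm_def, Lp.norm_def]

/-- Multiplication by an `L^∞` function, as a bounded operator on `L²`. -/
def mul2 (φ : Lp ℂ ∞ hm) : Lp ℂ 2 hm →L[ℂ] Lp ℂ 2 hm :=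
  LinearMap.mkContinuous
    { toFun := mulFun φ
      map_add' := mulFun_add' φ
      map_smul' := mulFun_smul' φ }
    ‖φ‖ (norm_mulFun_le φ)

lemma coeFn_mul2 (φ : Lp ℂ ∞ hm) (f : Lp ℂ 2 hm) :
    mul2 φ f =ᵐ[hm] fun t => φ t * f t := coeFn_mulFun φ f

/-- The Toeplitz operator `T^α_φ = V_α^* M_φ V_α` on `H²_α`. -/
def Toeplitz (α : ℂ × ℂ) (φ : Lp ℂ ∞ hm) : HardyA α →L[ℂ] HardyA α :=
  (HardyA α).orthogonalProjectionOnto ∘L (mul2 φ) ∘L (HardyA α).subtypeL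

/-- The classical Toeplitz operator `T_φ = V^* M_φ V` on `H²`. -/
def ToeplitzH (φ : Lp ℂ ∞ hm) : Hardy2 →L[ℂ] Hardy2 :=
  Hardy2.orthogonalProjectionOnto ∘L (mul2 φ) ∘L Hardy2.subtypeL

/-- The compression `W^* M_φ W` of multiplication by `φ` to `z²H²`. -/
def Toeplitz20 (φ : Lp ℂ ∞ hm) : Hardy20 →L[ℂ] Hardy20 :=
  Hardy20.orthogonalProjectionOnto ∘L (mul2 φ) ∘L Hardy20.subtypeL

/-- The `n`-th Fourier coefficient of an `L^∞` function on the circle. -/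
def hatInf (φ : Lp ℂ ∞ hm) (n : ℤ) : ℂ := fourierCoeff (⇑φ) n

/-- The Neil algebra `𝔄`, viewed inside `L^∞` via boundary values: the (boundary values of)
bounded analytic functions on the disc whose derivative vanishes at `0`; equivalently, those
`φ ∈ L^∞` whose Fourier coefficients vanish at all negative indices and at index `1`. -/
def NeilSet : Set (Lp ℂ ∞ hm) := {φ | (∀ n : ℤ, n < 0 → hatInf φ n = 0) ∧ hatInf φ 1 = 0}

/-- `𝔄₀ = z²H^∞`, the functions in the Neil algebra vanishing at `0`. -/
def NeilSet0 : Set (Lp ℂ ∞ hm) := {φ | ∀ n : ℤ, n < 2 → hatInf φ n = 0}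

/-- `H^∞`, viewed inside `L^∞` via boundary values. -/
def HinfSet : Set (Lp ℂ ∞ hm) := {φ | ∀ n : ℤ, n < 0 → hatInf φ n = 0}

/-- `φ ∈ L^∞` is unimodular if `|φ| = 1` a.e. -/
def Unimodular (φ : Lp ℂ ∞ hm) : Prop := ∀ᵐ t ∂hm, ‖φ t‖ = 1

/-- The product of two `L^∞` functions. -/
def mulInf (φ ψ : Lp ℂ ∞ hm) : Lp ℂ ∞ hm :=
  ((Lp.memLp ψ).smul (r := ∞) (Lp.memLp φ)).toLp (⇑φ • ⇑ψ)

lemma coeFn_mulInf (φ ψ : Lp ℂ ∞ hm) :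
    mulInf φ ψ =ᵐ[hm] fun t => φ t * ψ t := by
  filter_upwards [MemLp.coeFn_toLp ((Lp.memLp ψ).smul (r := ∞) (Lp.memLp φ))] with t ht
  simpa [mulInf, Pi.smul_apply', smul_eq_mul] using ht

/-- The complex conjugate of an `L^∞` function. -/
def conjInf (φ : Lp ℂ ∞ hm) : Lp ℂ ∞ hm :=
  (MemLp.of_le (Lp.memLp φ)
      (Complex.continuous_conj.comp_aestronglyMeasurable (Lp.aestronglyMeasurable φ))
      (Filter.Eventually.of_forall fun t => by simp)).toLp
    fun t => (starRingEnd ℂ) (φ t)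

lemma coeFn_conjInf (φ : Lp ℂ ∞ hm) :
    conjInf φ =ᵐ[hm] fun t => (starRingEnd ℂ) (φ t) :=
  MemLp.coeFn_toLp _

/-- A bounded operator is left invertible if it has a bounded left inverse. -/
def LeftInvertible {E F : Type*} [NormedAddCommGroup E] [NormedAddCommGroup F]
    [NormedSpace ℂ E] [NormedSpace ℂ F] (T : E →L[ℂ] F) : Prop :=
  ∃ S : F →L[ℂ] E, S ∘L T = ContinuousLinearMap.id ℂ E

/-- A bounded operator on a space is invertible if it has a bounded two-sided inverse. -/
def InvertibleOp {E : Type*} [NormedAddCommGroup E] [NormedSpace ℂ E] (T : E →L[ℂ] E) : Prop :=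
  ∃ S : E →L[ℂ] E, S ∘L T = ContinuousLinearMap.id ℂ E ∧ T ∘L S = ContinuousLinearMap.id ℂ E

/-- The value at `w` in the unit disc of the analytic extension of (an `L²` function in) a Hardy
space, via its Taylor coefficients. -/
def eval2 (f : Lp ℂ 2 hm) (w : ℂ) : ℂ := ∑' n : ℕ, hat2 f n * w ^ n

/-- The value at `w` in the unit disc of the analytic extension of (an `L^∞` function in) `H^∞`,
via its Taylor coefficients. -/
def evalInf (φ : Lp ℂ ∞ hm) (w : ℂ) : ℂ := ∑' n : ℕ, hatInf φ n * w ^ n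

/-- `ψ` is invertible in the Neil algebra. -/
def NeilInvertible (ψ : Lp ℂ ∞ hm) : Prop :=
  ψ ∈ NeilSet ∧ ∃ χ ∈ NeilSet, mulInf ψ χ = Lp.const ∞ hm (1 : ℂ)

/-- The orthogonal projection of `L²` onto `H²_α`, as an operator on `L²`. -/
def projA (α : ℂ × ℂ) : Lp ℂ 2 hm →L[ℂ] Lp ℂ 2 hm :=
  (HardyA α).subtypeL ∘L (HardyA α).orthogonalProjectionOnto

/-- The subspace `𝓜 ⊂ L¹` of functions whose Fourier coefficients vanish at `0` and at all
indices `≤ -2`. -/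
def MM : Set (Lp ℂ 1 hm) :=
  {h | fourierCoeff (⇑h) 0 = 0 ∧ ∀ n : ℤ, n ≤ -2 → fourierCoeff (⇑h) n = 0}
/-- The complex conjugate of an `L²` function. -/
def conj2 (f : Lp ℂ 2 hm) : Lp ℂ 2 hm :=
  (MemLp.of_le (Lp.memLp f)
      (Complex.continuous_conj.comp_aestronglyMeasurable (Lp.aestronglyMeasurable f))
      (Filter.Eventually.of_forall fun t => by simp)).toLp
    fun t => (starRingEnd ℂ) (f t)

lemma coeFn_conj2 (f : Lp ℂ 2 hm) :
    conj2 f =ᵐ[hm] fun t => (starRingEnd ℂ) (f t) :=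
  MemLp.coeFn_toLp _

lemma fourierCoeff_hm_congr {f g : CircleT → ℂ} (h : f =ᵐ[hm] g) (n : ℤ) :
    fourierCoeff f n = fourierCoeff g n := by
  unfold fourierCoeff
  exact integral_congr_ae (by filter_upwards [h] with t ht; rw [ht])

lemma integrable_fourier_smul {f : CircleT → ℂ} (hf : Integrable f hm) (n : ℤ) :
    Integrable (fun t => (fourier n t : ℂ) • f t) hm := by
  simp_rw [smul_eq_mul]
  exact hf.bdd_mul ((fourier n).continuous.aestronglyMeasurable)
    (Filter.Eventually.of_forall fun t => le_of_eq (Circle.norm_coe _))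

lemma fourierCoeff_add_of_integrable {f g : CircleT → ℂ}
    (hf : Integrable f hm) (hg : Integrable g hm) (n : ℤ) :
    fourierCoeff (f + g) n = fourierCoeff f n + fourierCoeff g n := by
  unfold fourierCoeff
  rw [← integral_add (integrable_fourier_smul hf (-n)) (integrable_fourier_smul hg (-n))]
  exact integral_congr_ae (Filter.Eventually.of_forall fun t => by
    simp only [Pi.add_apply, smul_eq_mul]; ring)

lemma fourierCoeff_smul (c : ℂ) (f : CircleT → ℂ) (n : ℤ) :
    fourierCoeff (c • f) n = c * fourierCoeff f n := by
  unfold fourierCoeff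
  have : (∫ t : CircleT, (fourier (-n)) t • (c • f) t ∂hm)
      = ∫ t : CircleT, c • ((fourier (-n)) t • f t) ∂hm := by
    refine integral_congr_ae (Filter.Eventually.of_forall fun t => ?_)
    simp only [Pi.smul_apply, smul_eq_mul]; ring
  rw [this, integral_smul, smul_eq_mul]

/-- `𝓜`, as a subspace of `L¹`. -/
def MMsub : Submodule ℂ (Lp ℂ 1 hm) where
  carrier := MM
  add_mem' := by
    intro f g hf hg
    have key : ∀ n : ℤ, fourierCoeff (⇑(f + g)) n = fourierCoeff ⇑f n + fourierCoeff ⇑g n := by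
      intro n
      rw [fourierCoeff_hm_congr (Lp.coeFn_add f g) n]
      exact fourierCoeff_add_of_integrable (L1.integrable_coeFn f) (L1.integrable_coeFn g) n
    exact ⟨by rw [key 0, hf.1, hg.1, add_zero],
      fun n hn => by rw [key n, hf.2 n hn, hg.2 n hn, add_zero]⟩
  zero_mem' := by
    have key : ∀ n : ℤ, fourierCoeff (⇑(0 : Lp ℂ 1 hm)) n = 0 := by
      intro n
      rw [fourierCoeff_hm_congr (Lp.coeFn_zero ℂ 1 hm) n]
      simp [fourierCoeff]
    exact ⟨key 0, fun n _ => key n⟩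
  smul_mem' := by
    intro c f hf
    have key : ∀ n : ℤ, fourierCoeff (⇑(c • f)) n = c * fourierCoeff ⇑f n := by
      intro n
      rw [fourierCoeff_hm_congr (Lp.coeFn_smul c f) n, ← fourierCoeff_smul c ⇑f n]
    exact ⟨by rw [key 0, hf.1, mul_zero], fun n hn => by rw [key n, hf.2 n hn, mul_zero]⟩

lemma hatInf_add (φ ψ : Lp ℂ ∞ hm) (n : ℤ) :
    hatInf (φ + ψ) n = hatInf φ n + hatInf ψ n := by
  unfold hatInf
  rw [fourierCoeff_hm_congr (Lp.coeFn_add φ ψ) n]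
  exact fourierCoeff_add_of_integrable ((Lp.memLp φ).integrable le_top)
    ((Lp.memLp ψ).integrable le_top) n

lemma hatInf_smul (c : ℂ) (φ : Lp ℂ ∞ hm) (n : ℤ) :
    hatInf (c • φ) n = c * hatInf φ n := by
  unfold hatInf
  rw [fourierCoeff_hm_congr (Lp.coeFn_smul c φ) n, ← fourierCoeff_smul c ⇑φ n]

lemma hatInf_zero (n : ℤ) : hatInf (0 : Lp ℂ ∞ hm) n = 0 := by
  unfold hatInf
  rw [fourierCoeff_hm_congr (Lp.coeFn_zero ℂ ∞ hm) n]
  simp [fourierCoeff]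

/-- The Neil algebra `𝔄`, as a subspace of `L^∞`. -/
def NeilSub : Submodule ℂ (Lp ℂ ∞ hm) where
  carrier := NeilSet
  add_mem' := fun hf hg =>
    ⟨fun n hn => by rw [hatInf_add, hf.1 n hn, hg.1 n hn, add_zero],
      by rw [hatInf_add, hf.2, hg.2, add_zero]⟩
  zero_mem' := ⟨fun n _ => hatInf_zero n, hatInf_zero 1⟩
  smul_mem' := fun c φ hφ =>
    ⟨fun n hn => by rw [hatInf_smul, hφ.1 n hn, mul_zero],
      by rw [hatInf_smul, hφ.2, mul_zero]⟩
def eb (n : ℤ) : Lp ℂ 2 hm := fourierBasis n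

lemma hat2_eb (m n : ℤ) : hat2 (eb m) n = if n = m then 1 else 0 := by
  classical
  rw [hat2, eb, fourierBasis.repr_self, lp.single_apply]
  simp [Pi.single_apply]

lemma hat2_ext {f g : Lp ℂ 2 hm} (h : ∀ n, hat2 f n = hat2 g n) : f = g := by
  apply fourierBasis.repr.injective
  apply lp.ext
  funext n
  exact h n

lemma norm_eb (n : ℤ) : ‖eb n‖ = 1 :=
  (fourierBasis (T := 2 * Real.pi)).orthonormal.1 n

lemma hat2_eq_inner' (f : Lp ℂ 2 hm) (n : ℤ) :
    hat2 f n = @inner ℂ _ _ (eb n) f :=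
  fourierBasis.repr_apply_apply f n

def uvec (α : ℂ × ℂ) : Lp ℂ 2 hm := α.1 • eb 0 + α.2 • eb 1

@[simp] lemma hat2_add' (f g : Lp ℂ 2 hm) (n : ℤ) :
    hat2 (f + g) n = hat2 f n + hat2 g n := by simp [hat2, map_add]
@[simp] lemma hat2_smul' (c : ℂ) (f : Lp ℂ 2 hm) (n : ℤ) :
    hat2 (c • f) n = c * hat2 f n := by simp [hat2, _root_.map_smul]
@[simp] lemma hat2_sub' (f g : Lp ℂ 2 hm) (n : ℤ) :
    hat2 (f - g) n = hat2 f n - hat2 g n := by simp [hat2, map_sub]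

lemma hat2_uvec (α : ℂ × ℂ) (n : ℤ) :
    hat2 (uvec α) n = (if n = 0 then α.1 else 0) + (if n = 1 then α.2 else 0) := by
  simp [uvec, hat2_eb]

lemma inner_uvec (α : ℂ × ℂ) (f : Lp ℂ 2 hm) :
    @inner ℂ _ _ (uvec α) f = (starRingEnd ℂ) α.1 * hat2 f 0 + (starRingEnd ℂ) α.2 * hat2 f 1 := by
  rw [uvec, inner_add_left, inner_smul_left, inner_smul_left, ← hat2_eq_inner', ← hat2_eq_inner']

lemma inner_uvec_self (α : ℂ × ℂ) (hα : ‖α.1‖ ^ 2 + ‖α.2‖ ^ 2 = 1) :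
    @inner ℂ _ _ (uvec α) (uvec α) = 1 := by
  rw [inner_uvec, hat2_uvec, hat2_uvec]
  simp only [if_true, if_pos rfl]
  norm_num
  rw [mul_comm, mul_comm ((starRingEnd ℂ) α.2), Complex.mul_conj, Complex.mul_conj]
  rw [← Complex.ofReal_add]
  norm_cast
  rw [Complex.normSq_eq_norm_sq, Complex.normSq_eq_norm_sq]
  exact hα

lemma norm_uvec (α : ℂ × ℂ) (hα : ‖α.1‖ ^ 2 + ‖α.2‖ ^ 2 = 1) : ‖uvec α‖ = 1 := by
  have h := inner_uvec_self α hα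
  have h2 : (‖uvec α‖ : ℝ) ^ 2 = 1 := by
    rw [← @inner_self_eq_norm_sq ℂ _ _ _ _ (uvec α), h]
    simp
  nlinarith [norm_nonneg (uvec α)]

lemma norm_uvec_sub (α β : ℂ × ℂ) :
    ‖uvec α - uvec β‖ ≤ ‖α.1 - β.1‖ + ‖α.2 - β.2‖ := by
  have : uvec α - uvec β = (α.1 - β.1) • eb 0 + (α.2 - β.2) • eb 1 := by
    simp [uvec, sub_smul]; abel
  rw [this]
  calc ‖(α.1 - β.1) • eb 0 + (α.2 - β.2) • eb 1‖
      ≤ ‖(α.1 - β.1) • eb 0‖ + ‖(α.2 - β.2) • eb 1‖ := norm_add_le _ _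
    _ = ‖α.1 - β.1‖ + ‖α.2 - β.2‖ := by rw [norm_smul, norm_smul, norm_eb, norm_eb, mul_one, mul_one]



local notation "⟪" x ", " y "⟫" => @inner ℂ _ _ x y

/-- Projection onto `Hardy20` as an operator on `L²`. -/
def Q2 : Lp ℂ 2 hm →L[ℂ] Lp ℂ 2 hm := Hardy20.subtypeL ∘L Hardy20.orthogonalProjectionOnto

lemma Q2_apply (x : Lp ℂ 2 hm) : Q2 x = (Hardy20.orthogonalProjectionOnto x : Lp ℂ 2 hm) := rfl

lemma eb_mem_Hardy20 {n : ℤ} (hn : 2 ≤ n) : eb n ∈ Hardy20 := by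
  intro m hm'
  rw [hat2_eb, if_neg (by omega)]

lemma uvec_mem_HardyA (α : ℂ × ℂ) : uvec α ∈ HardyA α := by
  constructor
  · intro n hn
    rw [hat2_uvec, if_neg (by omega), if_neg (by omega), add_zero]
  · rw [hat2_uvec, hat2_uvec]
    norm_num
    ring

lemma Hardy20_le_HardyA (α : ℂ × ℂ) : Hardy20 ≤ HardyA α := fun f hf =>
  ⟨fun n hn => hf n (by omega),
   by rw [hf 0 (by norm_num), hf 1 (by norm_num), mul_zero, mul_zero]⟩

lemma inner_uvec_Hardy20 (α : ℂ × ℂ) {f : Lp ℂ 2 hm} (hf : f ∈ Hardy20) :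
    ⟪uvec α, f⟫ = 0 := by
  rw [inner_uvec, hf 0 (by norm_num), hf 1 (by norm_num)]
  simp

lemma B2_conj_sum {α : ℂ × ℂ} (hα : α ∈ B2) :
    (starRingEnd ℂ) α.1 * α.1 + (starRingEnd ℂ) α.2 * α.2 = 1 := by
  have key : ∀ z : ℂ, (starRingEnd ℂ) z * z = ((‖z‖ ^ 2 : ℝ) : ℂ) := fun z => by
    rw [mul_comm, Complex.mul_conj]
    norm_cast
    rw [Complex.normSq_eq_norm_sq]
  rw [key, key, ← Complex.ofReal_add, hα]
  norm_num

lemma hat2_Q2 (x : Lp ℂ 2 hm) (n : ℤ) :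
    hat2 (Q2 x) n = if 2 ≤ n then hat2 x n else 0 := by
  by_cases hn : 2 ≤ n
  · rw [if_pos hn, hat2_eq_inner', hat2_eq_inner', Q2_apply]
    have h0 := Submodule.starProjection_inner_eq_zero x (eb n) (eb_mem_Hardy20 hn)
    rw [inner_eq_zero_symm, inner_sub_right, sub_eq_zero] at h0
    exact h0.symm
  · rw [if_neg hn]
    exact (Hardy20.orthogonalProjectionOnto x).2 n (by omega)

lemma Q2_mem (x : Lp ℂ 2 hm) : Q2 x ∈ Hardy20 := (Hardy20.orthogonalProjectionOnto x).2

lemma decompA {α : ℂ × ℂ} (hα : α ∈ B2) {w : Lp ℂ 2 hm} (hw : w ∈ HardyA α) :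
    w = Q2 w + ⟪uvec α, w⟫ • uvec α := by
  have hone := B2_conj_sum hα
  have hcon := hw.2
  apply hat2_ext
  intro n
  rw [hat2_add', hat2_smul', hat2_Q2, hat2_uvec, inner_uvec]
  by_cases h2 : 2 ≤ n
  · rw [if_pos h2, if_neg (by omega), if_neg (by omega)]
    ring
  · rw [if_neg h2]
    rcases lt_trichotomy n 0 with hneg | h0 | hpos
    · rw [hw.1 n hneg, if_neg (by omega), if_neg (by omega)]
      ring
    · subst h0
      norm_num
      linear_combination (-(hat2 w 0)) * hone + (starRingEnd ℂ) α.2 * hcon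
    · have h1 : n = 1 := by omega
      subst h1
      norm_num
      linear_combination (-(hat2 w 1)) * hone - (starRingEnd ℂ) α.1 * hcon


lemma projA_apply_eq {α : ℂ × ℂ} (hα : α ∈ B2) (x : Lp ℂ 2 hm) :
    projA α x = Q2 x + ⟪uvec α, x⟫ • uvec α := by
  have hmem : Q2 x + ⟪uvec α, x⟫ • uvec α ∈ HardyA α :=
    (HardyA α).add_mem (Hardy20_le_HardyA α (Q2_mem x))
      ((HardyA α).smul_mem _ (uvec_mem_HardyA α))
  refine Submodule.eq_starProjection_of_mem_of_inner_eq_zero hmem ?_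
  intro w hw
  have hdw := decompA hα hw
  have hA : ⟪x - Q2 x, Q2 w⟫ = (0 : ℂ) :=
    Submodule.starProjection_inner_eq_zero x (Q2 w) (Q2_mem w)
  have hB : ⟪uvec α, Q2 w⟫ = (0 : ℂ) := inner_uvec_Hardy20 α (Q2_mem w)
  have hC : ⟪Q2 x, uvec α⟫ = (0 : ℂ) := by
    rw [inner_eq_zero_symm]
    exact inner_uvec_Hardy20 α (Q2_mem x)
  have hE : ⟪uvec α, uvec α⟫ = (1 : ℂ) := inner_uvec_self α hα
  have hD : (starRingEnd ℂ) ⟪uvec α, x⟫ = ⟪x, uvec α⟫ := inner_conj_symm x (uvec α)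
  rw [inner_sub_left, sub_eq_zero] at hA
  rw [hdw]
  simp only [inner_sub_left, inner_add_left, inner_add_right, inner_smul_left, inner_smul_right]
  rw [hB, hC, hE, hA, hD]
  ring

lemma norm_projA_le (α : ℂ × ℂ) (x : Lp ℂ 2 hm) : ‖projA α x‖ ≤ ‖x‖ := by
  have h1 : ‖projA α x‖ = ‖(HardyA α).orthogonalProjectionOnto x‖ := rfl
  rw [h1]
  calc ‖(HardyA α).orthogonalProjectionOnto x‖
      ≤ ‖(HardyA α).orthogonalProjectionOnto‖ * ‖x‖ := ((HardyA α).orthogonalProjectionOnto).le_opNorm x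
    _ ≤ 1 * ‖x‖ := by gcongr; exact Submodule.orthogonalProjectionOnto_norm_le (K := HardyA α)
    _ = ‖x‖ := one_mul _

lemma projA_of_mem {α : ℂ × ℂ} {x : Lp ℂ 2 hm} (hx : x ∈ HardyA α) : projA α x = x :=
  Submodule.starProjection_eq_self_iff.mpr hx

lemma projA_sub_bound {α β : ℂ × ℂ} (hα : α ∈ B2) (hβ : β ∈ B2) (x : Lp ℂ 2 hm) :
    ‖projA α x - projA β x‖ ≤ 2 * ‖uvec α - uvec β‖ * ‖x‖ := by
  rw [projA_apply_eq hα, projA_apply_eq hβ]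
  have key : Q2 x + ⟪uvec α, x⟫ • uvec α - (Q2 x + ⟪uvec β, x⟫ • uvec β)
      = ⟪uvec α, x⟫ • (uvec α - uvec β) + ⟪uvec α - uvec β, x⟫ • uvec β := by
    rw [inner_sub_left, smul_sub, sub_smul]
    abel
  rw [key]
  have h1 : ‖⟪uvec α, x⟫ • (uvec α - uvec β)‖ ≤ ‖uvec α - uvec β‖ * ‖x‖ := by
    rw [norm_smul]
    calc ‖⟪uvec α, x⟫‖ * ‖uvec α - uvec β‖
        ≤ (‖uvec α‖ * ‖x‖) * ‖uvec α - uvec β‖ := by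
          gcongr; exact norm_inner_le_norm _ _
      _ = ‖uvec α - uvec β‖ * ‖x‖ := by rw [norm_uvec α hα]; ring
  have h2 : ‖⟪uvec α - uvec β, x⟫ • uvec β‖ ≤ ‖uvec α - uvec β‖ * ‖x‖ := by
    rw [norm_smul, norm_uvec β hβ, mul_one]
    exact norm_inner_le_norm _ _
  calc ‖⟪uvec α, x⟫ • (uvec α - uvec β) + ⟪uvec α - uvec β, x⟫ • uvec β‖
      ≤ ‖⟪uvec α, x⟫ • (uvec α - uvec β)‖ + ‖⟪uvec α - uvec β, x⟫ • uvec β‖ := norm_add_le _ _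
    _ ≤ ‖uvec α - uvec β‖ * ‖x‖ + ‖uvec α - uvec β‖ * ‖x‖ := add_le_add h1 h2
    _ = 2 * ‖uvec α - uvec β‖ * ‖x‖ := by ring

lemma norm_toeplitz_apply (α : ℂ × ℂ) (φ : Lp ℂ ∞ hm) (f : HardyA α) :
    ‖Toeplitz α φ f‖ = ‖projA α (mul2 φ (f : Lp ℂ 2 hm))‖ := rfl

lemma norm_mul2_le (φ : Lp ℂ ∞ hm) (x : Lp ℂ 2 hm) : ‖mul2 φ x‖ ≤ ‖φ‖ * ‖x‖ :=
  norm_mulFun_le φ x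


set_option maxHeartbeats 1000000 in
lemma transfer {α β : ℂ × ℂ} (hα : α ∈ B2) (hβ : β ∈ B2) (φ : Lp ℂ ∞ hm) {ε : ℝ}
    (hε0 : 0 < ε) (hε1 : ε ≤ 1)
    (hεlow : ∀ g : HardyA α, ε * ‖g‖ ≤ ‖Toeplitz α φ g‖)
    (hclose : 2 * ‖uvec α - uvec β‖ * (1 + 2 * ‖φ‖) ≤ ε / 2)
    (f : HardyA β) : ε / 2 * ‖f‖ ≤ ‖Toeplitz β φ f‖ := by
  set x : Lp ℂ 2 hm := (f : Lp ℂ 2 hm) with hx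
  set δ : ℝ := 2 * ‖uvec α - uvec β‖ with hδ
  have hδ0 : 0 ≤ δ := by positivity
  have hφ0 : (0:ℝ) ≤ ‖φ‖ := norm_nonneg _
  have hx0 : (0:ℝ) ≤ ‖x‖ := norm_nonneg _
  have hnf : ‖f‖ = ‖x‖ := rfl
  set g : HardyA α := (HardyA α).orthogonalProjectionOnto x with hg
  have hgc : (g : Lp ℂ 2 hm) = projA α x := rfl
  have hng : ‖g‖ = ‖(g : Lp ℂ 2 hm)‖ := rfl
  have hxβ : projA β x = x := projA_of_mem f.2
  have ha : ‖(g : Lp ℂ 2 hm) - x‖ ≤ δ * ‖x‖ := by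
    rw [hgc]
    nth_rewrite 2 [← hxβ]
    exact projA_sub_bound hα hβ x
  have hb : ‖x‖ - δ * ‖x‖ ≤ ‖g‖ := by
    have htri : ‖x‖ ≤ ‖(g : Lp ℂ 2 hm)‖ + ‖(g : Lp ℂ 2 hm) - x‖ := by
      have h' := norm_sub_le ((g : Lp ℂ 2 hm)) ((g : Lp ℂ 2 hm) - x)
      simpa using h'
    rw [hng]
    linarith
  have hc : ‖projA α (mul2 φ (g : Lp ℂ 2 hm))‖
      - ‖projA α (mul2 φ (g : Lp ℂ 2 hm)) - projA β (mul2 φ x)‖ ≤ ‖Toeplitz β φ f‖ := by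
    rw [norm_toeplitz_apply]
    have := norm_sub_norm_le (projA α (mul2 φ (g : Lp ℂ 2 hm))) (projA β (mul2 φ x))
    linarith
  have hd : ‖projA α (mul2 φ (g : Lp ℂ 2 hm)) - projA β (mul2 φ x)‖ ≤ 2 * δ * ‖φ‖ * ‖x‖ := by
    have ht1 : ‖projA α (mul2 φ (g : Lp ℂ 2 hm)) - projA α (mul2 φ x)‖ ≤ ‖φ‖ * (δ * ‖x‖) := by
      rw [← map_sub, ← map_sub]
      calc ‖projA α (mul2 φ ((g : Lp ℂ 2 hm) - x))‖
          ≤ ‖mul2 φ ((g : Lp ℂ 2 hm) - x)‖ := norm_projA_le _ _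
        _ ≤ ‖φ‖ * ‖(g : Lp ℂ 2 hm) - x‖ := norm_mul2_le _ _
        _ ≤ ‖φ‖ * (δ * ‖x‖) := by gcongr
    have ht2 : ‖projA α (mul2 φ x) - projA β (mul2 φ x)‖ ≤ δ * (‖φ‖ * ‖x‖) := by
      calc ‖projA α (mul2 φ x) - projA β (mul2 φ x)‖
          ≤ 2 * ‖uvec α - uvec β‖ * ‖mul2 φ x‖ := projA_sub_bound hα hβ _
        _ = δ * ‖mul2 φ x‖ := by rw [hδ]
        _ ≤ δ * (‖φ‖ * ‖x‖) := by gcongr; exact norm_mul2_le _ _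
    calc ‖projA α (mul2 φ (g : Lp ℂ 2 hm)) - projA β (mul2 φ x)‖
        ≤ ‖projA α (mul2 φ (g : Lp ℂ 2 hm)) - projA α (mul2 φ x)‖
          + ‖projA α (mul2 φ x) - projA β (mul2 φ x)‖ := by
            have := norm_sub_le_norm_sub_add_norm_sub
              (projA α (mul2 φ (g : Lp ℂ 2 hm))) (projA α (mul2 φ x)) (projA β (mul2 φ x))
            linarith
      _ ≤ ‖φ‖ * (δ * ‖x‖) + δ * (‖φ‖ * ‖x‖) := add_le_add ht1 ht2
      _ = 2 * δ * ‖φ‖ * ‖x‖ := by ring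
  have he : ε * (‖x‖ - δ * ‖x‖) ≤ ‖projA α (mul2 φ (g : Lp ℂ 2 hm))‖ := by
    calc ε * (‖x‖ - δ * ‖x‖) ≤ ε * ‖g‖ := by
          apply mul_le_mul_of_nonneg_left hb (le_of_lt hε0)
      _ ≤ ‖Toeplitz α φ g‖ := hεlow g
      _ = ‖projA α (mul2 φ (g : Lp ℂ 2 hm))‖ := norm_toeplitz_apply α φ g
  rw [hnf]
  nlinarith [mul_le_mul_of_nonneg_right hclose hx0, mul_nonneg hδ0 hx0,
    mul_nonneg (mul_nonneg hδ0 hφ0) hx0]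

set_option maxHeartbeats 2000000 in
set_option synthInstance.maxHeartbeats 400000 in
/-- If `T^α_φ` is left invertible for every `α ∈ 𝔹²`, then the lower bounds can be chosen
uniformly: there is `ε ∈ (0,1]` with `‖T^α_φ f‖ ≥ ε‖f‖` for all `α ∈ 𝔹²`, `f ∈ H²_α`. -/
theorem uniform_lower_bound_toeplitz (φ : Lp ℂ ∞ hm)
    (h : ∀ α ∈ B2, LeftInvertible (Toeplitz α φ)) :
    ∃ ε : ℝ, 0 < ε ∧ ε ≤ 1 ∧
      ∀ α ∈ B2, ∀ f : HardyA α, ε * ‖f‖ ≤ ‖Toeplitz α φ f‖ := by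
  classical
  have hφ0 : (0:ℝ) ≤ ‖φ‖ := norm_nonneg _
  have hpos : (0:ℝ) < 1 + 2 * ‖φ‖ := by positivity
  -- pointwise lower bounds from left invertibility
  have hlow : ∀ α : ℂ × ℂ, α ∈ B2 → ∃ ε : ℝ, 0 < ε ∧ ε ≤ 1 ∧
      ∀ f : HardyA α, ε * ‖f‖ ≤ ‖Toeplitz α φ f‖ := by
    intro α hα
    obtain ⟨S, hS⟩ := h α hα
    have hS1 : (0:ℝ) < 1 + ‖S‖ := by positivity
    refine ⟨(1 + ‖S‖)⁻¹, by positivity, ?_, ?_⟩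
    · rw [inv_le_one_iff₀]
      right
      linarith [norm_nonneg S]
    · intro f
      have hf : S (Toeplitz α φ f) = f := by
        have := congrArg (fun T : HardyA α →L[ℂ] HardyA α => T f) hS
        simpa using this
      have h1 : ‖f‖ ≤ (1 + ‖S‖) * ‖Toeplitz α φ f‖ := by
        calc ‖f‖ = ‖S (Toeplitz α φ f)‖ := by rw [hf]
          _ ≤ ‖S‖ * ‖Toeplitz α φ f‖ := S.le_opNorm _
          _ ≤ (1 + ‖S‖) * ‖Toeplitz α φ f‖ :=
              mul_le_mul_of_nonneg_right (by linarith) (norm_nonneg _)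
      calc (1 + ‖S‖)⁻¹ * ‖f‖
          ≤ (1 + ‖S‖)⁻¹ * ((1 + ‖S‖) * ‖Toeplitz α φ f‖) :=
            mul_le_mul_of_nonneg_left h1 (by positivity)
        _ = ‖Toeplitz α φ f‖ := by field_simp
  choose εα hε0 hε1 hεb using hlow
  -- compactness of B2
  have hB2c : IsCompact B2 := by
    have hclosed : IsClosed B2 := by
      have heq : B2 = (fun α : ℂ × ℂ => ‖α.1‖ ^ 2 + ‖α.2‖ ^ 2) ⁻¹' {1} := rfl
      rw [heq]
      exact IsClosed.preimage
        (((continuous_norm.comp continuous_fst).pow 2).add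
          ((continuous_norm.comp continuous_snd).pow 2)) isClosed_singleton
    have hbdd : Bornology.IsBounded B2 := by
      apply (Metric.isBounded_closedBall (x := ((0 : ℂ), (0 : ℂ))) (r := 1)).subset
      intro α hα
      have hα' : ‖α.1‖ ^ 2 + ‖α.2‖ ^ 2 = 1 := hα
      rw [Metric.mem_closedBall, Prod.dist_eq]
      have h1 : dist α.1 0 ≤ 1 := by
        rw [dist_zero_right]
        nlinarith [norm_nonneg α.1, norm_nonneg α.2]
      have h2 : dist α.2 0 ≤ 1 := by
        rw [dist_zero_right]
        nlinarith [norm_nonneg α.1, norm_nonneg α.2]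
      exact max_le h1 h2
    exact Metric.isCompact_of_isClosed_isBounded hclosed hbdd
  -- radii
  set r : {a : ℂ × ℂ // a ∈ B2} → ℝ := fun i => εα i.1 i.2 / (8 * (1 + 2 * ‖φ‖)) with hr
  have hrpos : ∀ i, 0 < r i := fun i => by
    have := hε0 i.1 i.2
    positivity
  have hcover : B2 ⊆ ⋃ i : {a : ℂ × ℂ // a ∈ B2}, Metric.ball (i : ℂ × ℂ) (r i) := by
    intro α hα
    exact Set.mem_iUnion.mpr ⟨⟨α, hα⟩, Metric.mem_ball_self (hrpos ⟨α, hα⟩)⟩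
  obtain ⟨t, ht⟩ := hB2c.elim_finite_subcover
    (fun i : {a : ℂ × ℂ // a ∈ B2} => Metric.ball (i : ℂ × ℂ) (r i))
    (fun i => Metric.isOpen_ball) hcover
  -- t is nonempty since B2 is
  have h10 : ((1 : ℂ), (0 : ℂ)) ∈ B2 := by
    show ‖(1:ℂ)‖ ^ 2 + ‖(0:ℂ)‖ ^ 2 = 1
    simp
  obtain ⟨i0, hi0t, _⟩ := Set.mem_iUnion₂.mp (ht h10)
  have htne : t.Nonempty := ⟨i0, hi0t⟩
  set εF : ℝ := t.inf' htne (fun i => εα i.1 i.2 / 2) with hεF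
  refine ⟨εF, ?_, ?_, ?_⟩
  · rw [hεF, Finset.lt_inf'_iff]
    exact fun i _ => half_pos (hε0 i.1 i.2)
  · calc εF ≤ εα i0.1 i0.2 / 2 := Finset.inf'_le _ hi0t
      _ ≤ 1 := by linarith [hε1 i0.1 i0.2, hε0 i0.1 i0.2]
  · intro β hβ f
    obtain ⟨i, hit, hballs⟩ := Set.mem_iUnion₂.mp (ht hβ)
    have hdist : dist β (i : ℂ × ℂ) < r i := Metric.mem_ball.mp hballs
    have hu : ‖uvec (i : ℂ × ℂ) - uvec β‖ ≤ 2 * dist β (i : ℂ × ℂ) := by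
      calc ‖uvec (i : ℂ × ℂ) - uvec β‖
          ≤ ‖(i : ℂ × ℂ).1 - β.1‖ + ‖(i : ℂ × ℂ).2 - β.2‖ := norm_uvec_sub _ _
        _ ≤ dist β (i : ℂ × ℂ) + dist β (i : ℂ × ℂ) := by
            rw [← dist_eq_norm, ← dist_eq_norm]
            have c1 : dist (i : ℂ × ℂ).1 β.1 ≤ dist β (i : ℂ × ℂ) := by
              rw [dist_comm, Prod.dist_eq]
              exact le_max_left _ _
            have c2 : dist (i : ℂ × ℂ).2 β.2 ≤ dist β (i : ℂ × ℂ) := by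
              rw [dist_comm, Prod.dist_eq]
              exact le_max_right _ _
            exact add_le_add c1 c2
        _ = 2 * dist β (i : ℂ × ℂ) := by ring
    have hclose : 2 * ‖uvec (i : ℂ × ℂ) - uvec β‖ * (1 + 2 * ‖φ‖) ≤ εα i.1 i.2 / 2 := by
      have hrle : dist β (i : ℂ × ℂ) ≤ εα i.1 i.2 / (8 * (1 + 2 * ‖φ‖)) := le_of_lt hdist
      have := mul_le_mul_of_nonneg_right hrle (le_of_lt hpos)
      have key : εα i.1 i.2 / (8 * (1 + 2 * ‖φ‖)) * (1 + 2 * ‖φ‖) = εα i.1 i.2 / 8 := by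
        field_simp
      nlinarith [dist_nonneg (x := β) (y := (i : ℂ × ℂ)), hε0 i.1 i.2]
    have htr := transfer i.2 hβ φ (hε0 i.1 i.2) (hε1 i.1 i.2) (hεb i.1 i.2) hclose f
    calc εF * ‖f‖ ≤ εα i.1 i.2 / 2 * ‖f‖ :=
          mul_le_mul_of_nonneg_right (Finset.inf'_le _ hit) (norm_nonneg _)
      _ ≤ ‖Toeplitz β φ f‖ := htr


end
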